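/- Let G be a finite simple graph, let C be an edge 2-coloring of G, and let χ be a characteristic subgraph of G with respect to C. If u and v are vertices that both have degree 2 in χ and uv is an edge of G, then uv is an edge of χ. -/
import Mathlib


open SimpleGraph

/-- `C` is an edge 2-coloring of `G`: for every vertex, the edges incident to it
carry at most 2 distinct colors. -/
def IsEdge2Coloring {V : Type*} (G : SimpleGraph V) (C : Sym2 V → ℕ) : Prop :=
  ∀ v : V, (C '' G.incidenceSet v).ncard ≤ 2

/-- The number of distinct colors used by a coloring `C` on the edges of `G`. -/
noncomputable def numColors {V : Type*} (G : SimpleGraph V) (C : Sym2 V → ℕ) : ℕ :=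
  (C '' G.edgeSet).ncard

/-- `OPT G`: the maximum number of colors used by an edge 2-coloring of `G`. -/
noncomputable def OPT {V : Type*} (G : SimpleGraph V) : ℕ :=
  sSup {n : ℕ | ∃ C : Sym2 V → ℕ, IsEdge2Coloring G C ∧ numColors G C = n}

/-- `M` is a matching of `G`, given as a set of edges: the edges belong to `G` and
are pairwise vertex-disjoint. -/
def IsMatchingSet {V : Type*} (G : SimpleGraph V) (M : Set (Sym2 V)) : Prop :=
  M ⊆ G.edgeSet ∧ ∀ e ∈ M, ∀ f ∈ M, e ≠ f → ∀ v : V, v ∈ e → v ∉ f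

/-- `ALG G M`: number of colors produced by the matching based algorithm, i.e.
`|M|` plus the number of connected components of `G − M`. -/
noncomputable def ALG {V : Type*} (G : SimpleGraph V) (M : Set (Sym2 V)) : ℕ :=
  M.ncard + Nat.card (G.deleteEdges M).ConnectedComponent

/-- `H` is a characteristic subgraph of `G` with respect to the coloring `C`:
a subgraph of `G` containing exactly one edge of each color used by `C`. -/
def IsCharSubgraph {V : Type*} (G : SimpleGraph V) (C : Sym2 V → ℕ)
    (H : SimpleGraph V) : Prop :=
  H ≤ G ∧ ∀ c ∈ C '' G.edgeSet, ∃! e, e ∈ H.edgeSet ∧ C e = c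

open SimpleGraph

lemma aux_incident {V : Type*} [Fintype V] (G : SimpleGraph V)
    (C : Sym2 V → ℕ) (hC : IsEdge2Coloring G C)
    (H : SimpleGraph V) (hH : IsCharSubgraph G C H) (w x : V)
    (hw : (H.neighborSet w).ncard = 2) (hwx : G.Adj w x) :
    ∃ e, (e ∈ H.edgeSet ∧ C e = C s(w,x)) ∧ w ∈ e := by
  obtain ⟨a, b, hab, hset⟩ := Set.ncard_eq_two.mp hw
  have ha : H.Adj w a := by
    have : a ∈ H.neighborSet w := by rw [hset]; simp
    exact this
  have hb : H.Adj w b := by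
    have : b ∈ H.neighborSet w := by rw [hset]; simp
    exact this
  have haG : s(w,a) ∈ G.edgeSet := (hH.1 ha)
  have hbG : s(w,b) ∈ G.edgeSet := (hH.1 hb)
  have hc12 : C s(w,a) ≠ C s(w,b) := by
    intro h
    obtain ⟨e, _, huniq⟩ := hH.2 (C s(w,a)) ⟨s(w,a), haG, rfl⟩
    have h1 : s(w,a) = e := huniq _ ⟨ha, rfl⟩
    have h2 : s(w,b) = e := huniq _ ⟨hb, h.symm⟩
    rw [← h2] at h1
    exact hab (Sym2.congr_right.mp h1)
  have hSfin : (C '' G.incidenceSet w).Finite := (Set.toFinite _).image _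
  have hmem : ∀ y, G.Adj w y → C s(w,y) ∈ C '' G.incidenceSet w := by
    intro y hy
    exact ⟨s(w,y), G.mk'_mem_incidenceSet_iff.mpr ⟨hy, Or.inl rfl⟩, rfl⟩
  have hor : C s(w,x) = C s(w,a) ∨ C s(w,x) = C s(w,b) := by
    by_contra h
    push_neg at h
    have hsub : ({C s(w,x), C s(w,a), C s(w,b)} : Set ℕ) ⊆ C '' G.incidenceSet w := by
      intro y hy
      rcases hy with rfl | rfl | rfl
      exacts [hmem x hwx, hmem a (hH.1 ha), hmem b (hH.1 hb)]
    have h3 : ({C s(w,x), C s(w,a), C s(w,b)} : Set ℕ).ncard = 3 := by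
      rw [Set.ncard_insert_of_notMem (by simp [h.1, h.2]),
        Set.ncard_insert_of_notMem (by simp [hc12]), Set.ncard_singleton]
    have hle := Set.ncard_le_ncard hsub hSfin
    have h2le := hC w
    rw [h3] at hle
    omega
  rcases hor with h | h
  · exact ⟨s(w,a), ⟨ha, h.symm⟩, Sym2.mem_mk_left _ _⟩
  · exact ⟨s(w,b), ⟨hb, h.symm⟩, Sym2.mem_mk_left _ _⟩

theorem deg_two_adj_mem_charSubgraph {V : Type*} [Fintype V] (G : SimpleGraph V)
    (C : Sym2 V → ℕ) (hC : IsEdge2Coloring G C)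
    (H : SimpleGraph V) (hH : IsCharSubgraph G C H) (u v : V)
    (hu : (H.neighborSet u).ncard = 2) (hv : (H.neighborSet v).ncard = 2)
    (huv : G.Adj u v) : H.Adj u v := by
  obtain ⟨e, he, huniq⟩ := hH.2 (C s(u,v)) ⟨s(u,v), huv, rfl⟩
  obtain ⟨e1, he1, hu1⟩ := aux_incident G C hC H hH u v hu huv
  obtain ⟨e2, he2, hv2⟩ := aux_incident G C hC H hH v u hv huv.symm
  have h1 : e1 = e := huniq _ he1
  have h2 : e2 = e := huniq _ ⟨he2.1, by rw [he2.2, Sym2.eq_swap]⟩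
  have hue : u ∈ e := h1 ▸ hu1
  have hve : v ∈ e := h2 ▸ hv2
  have : e = s(u,v) := (Sym2.mem_and_mem_iff huv.ne).mp ⟨hue, hve⟩
  have := this ▸ he.1
  exact this
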